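/- Let K be a field and p a polynomial over K with natDegree d ≥ 2. For every j ≥ 1, the set {z ∈ K : (fun z => p.eval z)^[j] z = z} of fixed points of the j-th iterate of the evaluation map of p is finite with at most d^j elements; consequently, for every k ≥ 1, the union ⋃_{j | k, j < k} {z ∈ K : (fun z => p.eval z)^[j] z = z} over all proper divisors j of k is finite with cardinality at most 2·k·√(d^k). -/

import Mathlib

open Polynomial

private lemma ncard_biUnion_le' {α β : Type*} (s : Finset β) (f : β → Set α) :
    (⋃ j ∈ s, f j).ncard ≤ ∑ j ∈ s, (f j).ncard := by
  classical
  induction s using Finset.induction with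
  | empty => simp
  | insert _ _ hns ih =>
    rename_i a s'
    rw [Finset.set_biUnion_insert, Finset.sum_insert hns]
    exact le_trans (Set.ncard_union_le _ _) (Nat.add_le_add_left ih _)

/-- Let `p` be a polynomial over a field `K` of `natDegree d ≥ 2`. For every `j ≥ 1`, the
fixed-point set of the `j`-th iterate of the evaluation map of `p` is finite with at most
`d^j` elements; consequently, for every `k ≥ 1`, the union of these fixed-point sets over
all proper divisors `j` of `k` is finite with cardinality at most `2·k·√(d^k)`. -/
theorem polynomial_iterate_fixedPoints_card {K : Type*} [Field K] (p : Polynomial K)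
    (d : ℕ) (hdeg : p.natDegree = d) (hd : 2 ≤ d) :
    (∀ j : ℕ, 1 ≤ j →
      ({z : K | (fun z => p.eval z)^[j] z = z}).Finite ∧
        ({z : K | (fun z => p.eval z)^[j] z = z}).ncard ≤ d ^ j) ∧
    (∀ k : ℕ, 1 ≤ k →
      (⋃ j ∈ k.properDivisors, {z : K | (fun z => p.eval z)^[j] z = z}).Finite ∧
        ((⋃ j ∈ k.properDivisors, {z : K | (fun z => p.eval z)^[j] z = z}).ncard : ℝ) ≤
          2 * k * Real.sqrt ((d : ℝ) ^ k)) := by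
  classical
  have key : ∀ j : ℕ, 1 ≤ j →
      ({z : K | (fun z => p.eval z)^[j] z = z}).Finite ∧
        ({z : K | (fun z => p.eval z)^[j] z = z}).ncard ≤ d ^ j := by
    intro j hj
    set q : Polynomial K := p.comp^[j] X with hq
    have hqdeg : q.natDegree = d ^ j := by
      rw [hq, natDegree_iterate_comp, natDegree_X, hdeg, mul_one]
    have hdj : 2 ≤ d ^ j := le_trans hd (Nat.le_self_pow (by omega) d)
    have hXdeg : (X : Polynomial K).natDegree < q.natDegree := by
      rw [hqdeg, natDegree_X]; omega
    have hne : q - X ≠ 0 := by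
      intro h
      have hqx : q = X := by linear_combination (norm := ring_nf) h
      rw [hqx] at hXdeg; omega
    have hsub : {z : K | (fun z => p.eval z)^[j] z = z} = {z : K | (q - X).IsRoot z} := by
      ext z
      simp only [Set.mem_setOf_eq, IsRoot, eval_sub, eval_X, sub_eq_zero, hq,
        iterate_comp_eval]
    have hfin : ({z : K | (fun z => p.eval z)^[j] z = z}).Finite := by
      rw [hsub]; exact finite_setOf_isRoot hne
    refine ⟨hfin, ?_⟩
    have hdegsub : (q - X).natDegree = d ^ j := by
      rw [natDegree_sub_eq_left_of_natDegree_lt hXdeg, hqdeg]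
    rw [hsub]
    have hsubset : {z : K | (q - X).IsRoot z} ⊆ ((q - X).roots.toFinset : Set K) := by
      intro z hz
      simp only [Multiset.mem_toFinset, Finset.mem_coe]
      exact (mem_roots hne).2 hz
    calc ({z : K | (q - X).IsRoot z}).ncard ≤ ((q - X).roots.toFinset : Set K).ncard :=
          Set.ncard_le_ncard hsubset (Finset.finite_toSet _)
      _ = (q - X).roots.toFinset.card := by rw [Set.ncard_coe_finset]
      _ ≤ Multiset.card (q - X).roots := Multiset.toFinset_card_le _
      _ ≤ (q - X).natDegree := (q - X).card_roots'
      _ = d ^ j := hdegsub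
  refine ⟨key, ?_⟩
  intro k hk
  have hjpos : ∀ j ∈ k.properDivisors, 1 ≤ j := by
    intro j hj
    rw [Nat.mem_properDivisors] at hj
    rcases Nat.eq_zero_or_pos j with rfl | h1
    · exact absurd (Nat.eq_zero_of_zero_dvd hj.1) (by omega)
    · exact h1
  have hfin : ∀ j ∈ k.properDivisors, ({z : K | (fun z => p.eval z)^[j] z = z}).Finite :=
    fun j hj => (key j (hjpos j hj)).1
  refine ⟨Set.Finite.biUnion (Finset.finite_toSet _) hfin, ?_⟩
  have h1 : (⋃ j ∈ k.properDivisors, {z : K | (fun z => p.eval z)^[j] z = z}).ncard ≤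
      ∑ j ∈ k.properDivisors, ({z : K | (fun z => p.eval z)^[j] z = z}).ncard :=
    ncard_biUnion_le' _ _
  have hsqrt : ∀ j ∈ k.properDivisors, ((d : ℝ) ^ j : ℝ) ≤ Real.sqrt ((d : ℝ) ^ k) := by
    intro j hj
    have hj1 := hjpos j hj
    rw [Nat.mem_properDivisors] at hj
    have h2j : 2 * j ≤ k := by
      obtain ⟨m, rfl⟩ := hj.1
      have hm : 2 ≤ m := by
        rcases m with _ | _ | m
        · omega
        · omega
        · omega
      nlinarith
    rw [Real.le_sqrt (by positivity)]
    calc ((d:ℝ) ^ j) ^ 2 = (d:ℝ) ^ (2 * j) := by rw [← pow_mul, mul_comm]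
      _ ≤ (d:ℝ) ^ k := pow_le_pow_right₀ (by exact_mod_cast (by omega : 1 ≤ d)) h2j
    positivity
  calc ((⋃ j ∈ k.properDivisors, {z : K | (fun z => p.eval z)^[j] z = z}).ncard : ℝ)
      ≤ ((∑ j ∈ k.properDivisors, ({z : K | (fun z => p.eval z)^[j] z = z}).ncard : ℕ) : ℝ) := by
        exact_mod_cast h1
    _ ≤ ∑ j ∈ k.properDivisors, ((d : ℝ) ^ j) := by
        push_cast
        exact Finset.sum_le_sum fun j hj => by exact_mod_cast (key j (hjpos j hj)).2
    _ ≤ ∑ j ∈ k.properDivisors, Real.sqrt ((d : ℝ) ^ k) :=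
        Finset.sum_le_sum hsqrt
    _ = (k.properDivisors.card : ℝ) * Real.sqrt ((d : ℝ) ^ k) := by
        rw [Finset.sum_const, nsmul_eq_mul]
    _ ≤ 2 * k * Real.sqrt ((d : ℝ) ^ k) := by
        have hcard : k.properDivisors.card ≤ k := by
          have hsub2 : k.properDivisors ⊆ Finset.range k := fun j hj =>
            Finset.mem_range.2 (Nat.mem_properDivisors.1 hj).2
          calc k.properDivisors.card ≤ (Finset.range k).card := Finset.card_le_card hsub2
            _ = k := Finset.card_range k
        have hs : (0:ℝ) ≤ Real.sqrt ((d : ℝ) ^ k) := Real.sqrt_nonneg _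
        have hc : (k.properDivisors.card : ℝ) ≤ 2 * k := by
          have : (k.properDivisors.card : ℝ) ≤ (k : ℝ) := by exact_mod_cast hcard
          linarith [Nat.cast_nonneg (α := ℝ) k]
        nlinarith
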